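/- For every β > 0 there exists a constant C < ∞ such that for all integers n ≥ 1, all integers k with n/2 ≤ k < n, and all x ∈ ℤ: Σ_{y ∈ ℤ} exp(-β y^2 / k) · exp(-β (x-y)^2 / (n-k)) ≤ C·√(n-k)·exp(-β x^2 / (4n)). -/

import Mathlib

open Real

private lemma summable_gauss {c : ℝ} (hc : 0 < c) :
    Summable (fun z : ℤ => Real.exp (-c * (z : ℝ) ^ 2)) := by
  have base : Summable (fun n : ℕ => Real.exp (-c) ^ n) :=
    summable_geometric_of_lt_one (Real.exp_pos _).le
      (Real.exp_lt_one_iff.mpr (neg_neg_iff_pos.mpr hc))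
  have key : ∀ n : ℕ, Real.exp (-c * (n : ℝ) ^ 2) ≤ Real.exp (-c) ^ n := by
    intro n
    rw [← Real.exp_nat_mul, Real.exp_le_exp]
    have h : n ≤ n ^ 2 := Nat.le_self_pow two_ne_zero n
    have h' : (n : ℝ) ≤ (n : ℝ) ^ 2 := by exact_mod_cast h
    nlinarith
  apply Summable.of_nat_of_neg
  · exact Summable.of_nonneg_of_le (fun n => (Real.exp_pos _).le) key base
  · refine Summable.of_nonneg_of_le (fun n => (Real.exp_pos _).le) (fun n => ?_) base
    push_cast
    rw [neg_sq]
    exact key n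

private lemma gauss_tsum_le {c : ℝ} (hc : 0 < c) (m : ℕ) (hm : 1 ≤ m) :
    ∑' z : ℤ, Real.exp (-(c / m) * (z : ℝ) ^ 2)
      ≤ (Real.sqrt (π / c) * ∑' z : ℤ, Real.exp (-(π ^ 2 / c) * (z : ℝ) ^ 2)) * Real.sqrt m := by
  have hm0 : (0:ℝ) < m := by exact_mod_cast hm
  set a : ℝ := c / (π * m) with ha_def
  have ha : 0 < a := div_pos hc (by positivity)
  have key := Real.tsum_exp_neg_mul_int_sq ha
  have h1 : ∀ z : ℤ, -π * a * (z:ℝ)^2 = -(c/m) * (z:ℝ)^2 := by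
    intro z
    have : -π * a = -(c/m) := by
      rw [ha_def]; field_simp
    rw [this]
  have h2 : ∀ z : ℤ, -π / a * (z:ℝ)^2 = -(π^2 * m / c) * (z:ℝ)^2 := by
    intro z
    have : -π / a = -(π^2 * m / c) := by
      rw [ha_def]; field_simp
    rw [this]
  simp only [h1, h2] at key
  rw [key]
  have hinner : ∑' z : ℤ, Real.exp (-(π^2 * m / c) * (z:ℝ)^2)
      ≤ ∑' z : ℤ, Real.exp (-(π ^ 2 / c) * (z : ℝ) ^ 2) := by
    apply Summable.tsum_le_tsum _ (summable_gauss (by positivity)) (summable_gauss (by positivity))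
    intro z
    rw [Real.exp_le_exp]
    have hz : (0:ℝ) ≤ (z:ℝ)^2 := sq_nonneg _
    have hm1 : (1:ℝ) ≤ m := by exact_mod_cast hm
    gcongr
    nlinarith [sq_nonneg (π : ℝ)]
  have hcoef : (1:ℝ) / a ^ (1/2 : ℝ) = Real.sqrt (π / c) * Real.sqrt m := by
    rw [← Real.sqrt_eq_rpow, one_div, ← Real.sqrt_inv, ha_def]
    rw [← Real.sqrt_mul (by positivity)]
    congr 1
    field_simp
  rw [hcoef]
  have hT : 0 ≤ ∑' z : ℤ, Real.exp (-(π ^ 2 / c) * (z : ℝ) ^ 2) :=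
    tsum_nonneg fun z => (Real.exp_pos _).le
  calc Real.sqrt (π / c) * Real.sqrt m * ∑' z : ℤ, Real.exp (-(π^2 * m / c) * (z:ℝ)^2)
      ≤ Real.sqrt (π / c) * Real.sqrt m * ∑' z : ℤ, Real.exp (-(π ^ 2 / c) * (z : ℝ) ^ 2) := by
        apply mul_le_mul_of_nonneg_left hinner (by positivity)
    _ = (Real.sqrt (π / c) * ∑' z : ℤ, Real.exp (-(π ^ 2 / c) * (z : ℝ) ^ 2)) * Real.sqrt m := by
        ring

private lemma exponent_ineq {β K M N X Y : ℝ} (hβ : 0 < β) (hK : 0 < K) (hM : 0 < M)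
    (hKN : K ≤ N) (h2M : 2 * M ≤ N) :
    -β * Y ^ 2 / K + -β * (X - Y) ^ 2 / M ≤ -β * X ^ 2 / (4 * N) + -(β / 2 / M) * (X - Y) ^ 2 := by
  have hN : 0 < N := lt_of_lt_of_le (by linarith) h2M
  have h1 : β * Y ^ 2 / N ≤ β * Y ^ 2 / K :=
    div_le_div_of_nonneg_left (by positivity) hK hKN
  have h2 : β * (X - Y) ^ 2 / N ≤ β * (X - Y) ^ 2 / (2 * M) :=
    div_le_div_of_nonneg_left (by positivity) (by positivity) h2M
  have h3 : β * X ^ 2 / (4 * N) ≤ (β * Y ^ 2 + β * (X - Y) ^ 2) / N := by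
    have he : β * X ^ 2 / (4 * N) = (β * X ^ 2 / 4) / N := by ring
    rw [he]
    gcongr
    nlinarith [mul_nonneg hβ.le (sq_nonneg (Y - (X - Y))), mul_nonneg hβ.le (sq_nonneg Y),
      mul_nonneg hβ.le (sq_nonneg (X - Y))]
  have h4 : β * Y ^ 2 / N + β * (X - Y) ^ 2 / N = (β * Y ^ 2 + β * (X - Y) ^ 2) / N := by ring
  have h5 : β * (X - Y) ^ 2 / (2 * M) + β * (X - Y) ^ 2 / (2 * M) = β * (X - Y) ^ 2 / M := by
    field_simp
    ring
  have hpos : β * X ^ 2 / (4 * N) + β * (X - Y) ^ 2 / (2 * M)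
      ≤ β * Y ^ 2 / K + β * (X - Y) ^ 2 / M := by linarith
  have e1 : -β * Y ^ 2 / K + -β * (X - Y) ^ 2 / M
      = -(β * Y ^ 2 / K + β * (X - Y) ^ 2 / M) := by ring
  have e2 : -β * X ^ 2 / (4 * N) + -(β / 2 / M) * (X - Y) ^ 2
      = -(β * X ^ 2 / (4 * N) + β * (X - Y) ^ 2 / (2 * M)) := by ring
  rw [e1, e2]
  exact neg_le_neg hpos

theorem discrete_gaussian_convolution_bound (β : ℝ) (hβ : 0 < β) :
    ∃ C : ℝ, ∀ n k : ℕ, 1 ≤ n → n ≤ 2 * k → k < n → ∀ x : ℤ,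
      ∑' y : ℤ, Real.exp (-β * (y : ℝ) ^ 2 / k) * Real.exp (-β * ((x : ℝ) - y) ^ 2 / ((n : ℝ) - k))
        ≤ C * Real.sqrt ((n : ℝ) - k) * Real.exp (-β * (x : ℝ) ^ 2 / (4 * n)) := by
  have hc : 0 < β / 2 := by positivity
  refine ⟨Real.sqrt (π / (β / 2)) * ∑' z : ℤ, Real.exp (-(π ^ 2 / (β / 2)) * (z : ℝ) ^ 2), ?_⟩
  intro n k hn hnk hkn x
  obtain ⟨m, hm_def⟩ : ∃ m : ℕ, m = n - k := ⟨_, rfl⟩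
  have hm : 1 ≤ m := by omega
  have hk1 : 1 ≤ k := by omega
  have hmr : ((n:ℝ) - k) = (m:ℝ) := by
    subst hm_def
    push_cast [Nat.cast_sub hkn.le]
    ring
  have hk0 : (0:ℝ) < k := by exact_mod_cast hk1
  have hm0 : (0:ℝ) < m := by exact_mod_cast hm
  have hn0 : (0:ℝ) < n := by exact_mod_cast hn
  have hkN : (k:ℝ) ≤ n := by exact_mod_cast hkn.le
  have h2m : 2*(m:ℝ) ≤ (n:ℝ) := by
    have h : 2*m ≤ n := by omega
    exact_mod_cast h
  -- termwise bound
  have hterm : ∀ y : ℤ,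
      Real.exp (-β * (y : ℝ) ^ 2 / k) * Real.exp (-β * ((x : ℝ) - y) ^ 2 / ((n : ℝ) - k))
        ≤ Real.exp (-β * (x : ℝ) ^ 2 / (4 * n)) * Real.exp (-(β/2/m) * ((x:ℝ) - y)^2) := by
    intro y
    rw [hmr, ← Real.exp_add, ← Real.exp_add, Real.exp_le_exp]
    exact exponent_ineq hβ hk0 hm0 hkN h2m
  -- summability
  have hgm : (0:ℝ) < β / 2 / m := by positivity
  have hshiftS : ∀ d : ℝ, 0 < d → Summable (fun y : ℤ => Real.exp (-d * ((x:ℝ) - y)^2)) := by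
    intro d hd
    have h := (Equiv.subLeft x).summable_iff.mpr (summable_gauss hd)
    apply h.congr
    intro y
    simp only [Function.comp, Equiv.subLeft_apply]
    push_cast
    ring_nf
  have hS2 : Summable (fun y : ℤ => Real.exp (-(β/2/m) * ((x:ℝ) - y)^2)) := hshiftS _ hgm
  have hS1 : Summable (fun y : ℤ =>
      Real.exp (-β * (y : ℝ) ^ 2 / k) * Real.exp (-β * ((x : ℝ) - y) ^ 2 / ((n : ℝ) - k))) := by
    apply Summable.of_nonneg_of_le (fun y => by positivity)
      (f := fun y : ℤ => Real.exp (-(β/m) * ((x:ℝ) - y)^2))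
    · intro y
      have e1 : Real.exp (-β * (y : ℝ) ^ 2 / k) ≤ 1 := by
        rw [Real.exp_le_one_iff]
        have h : (0:ℝ) ≤ β * (y:ℝ)^2 / k := by positivity
        have h2 : -β * (y : ℝ) ^ 2 / k = -(β * (y:ℝ)^2 / k) := by ring
        rw [h2]
        linarith
      have e2 : Real.exp (-β * ((x : ℝ) - y) ^ 2 / ((n : ℝ) - k))
          = Real.exp (-(β/m) * ((x:ℝ) - y)^2) := by
        rw [hmr]
        congr 1
        ring
      rw [e2]
      exact mul_le_of_le_one_left (Real.exp_pos _).le e1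
    · exact hshiftS _ (by positivity)
  have hS3 : Summable (fun y : ℤ =>
      Real.exp (-β * (x : ℝ) ^ 2 / (4 * n)) * Real.exp (-(β/2/m) * ((x:ℝ) - y)^2)) :=
    hS2.mul_left _
  have hshift : ∑' y : ℤ, Real.exp (-(β/2/m) * ((x:ℝ) - y)^2)
      = ∑' z : ℤ, Real.exp (-(β/2/m) * (z:ℝ)^2) := by
    rw [← (Equiv.subLeft x).tsum_eq (fun z : ℤ => Real.exp (-(β/2/m) * (z:ℝ)^2))]
    congr 1
    funext y
    simp only [Equiv.subLeft_apply]
    push_cast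
    ring_nf
  have hgauss : ∑' z : ℤ, Real.exp (-(β/2/m) * (z:ℝ)^2)
      ≤ (Real.sqrt (π / (β/2)) * ∑' z : ℤ, Real.exp (-(π ^ 2 / (β/2)) * (z : ℝ) ^ 2)) *
        Real.sqrt m := gauss_tsum_le hc m hm
  calc ∑' y : ℤ, Real.exp (-β * (y : ℝ) ^ 2 / k) * Real.exp (-β * ((x : ℝ) - y) ^ 2 / ((n : ℝ) - k))
      ≤ ∑' y : ℤ, Real.exp (-β * (x : ℝ) ^ 2 / (4 * n)) * Real.exp (-(β/2/m) * ((x:ℝ) - y)^2) :=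
        Summable.tsum_le_tsum hterm hS1 hS3
    _ = Real.exp (-β * (x : ℝ) ^ 2 / (4 * n)) * ∑' y : ℤ, Real.exp (-(β/2/m) * ((x:ℝ) - y)^2) :=
        tsum_mul_left
    _ = Real.exp (-β * (x : ℝ) ^ 2 / (4 * n)) * ∑' z : ℤ, Real.exp (-(β/2/m) * (z:ℝ)^2) := by
        rw [hshift]
    _ ≤ Real.exp (-β * (x : ℝ) ^ 2 / (4 * n)) *
        ((Real.sqrt (π / (β/2)) * ∑' z : ℤ, Real.exp (-(π ^ 2 / (β/2)) * (z : ℝ) ^ 2)) *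
          Real.sqrt m) :=
        mul_le_mul_of_nonneg_left hgauss (Real.exp_pos _).le
    _ = (Real.sqrt (π / (β/2)) * ∑' z : ℤ, Real.exp (-(π ^ 2 / (β/2)) * (z : ℝ) ^ 2)) *
        Real.sqrt ((n:ℝ) - k) * Real.exp (-β * (x : ℝ) ^ 2 / (4 * n)) := by
        rw [hmr]; ring
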